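/- Let m ≥ 1, let c > 0, let D be a finitely supported probability distribution over valuations on m items, let p be an item pricing, and fix a selection rule A. Define L = {j ∈ Fin m : p_j > 8m²c} and the item pricing q by q_j = p_j / 2 for j ∈ L and q_j = max{p_j, 2mc} for j ∉ L. Then q_j ≥ 2mc for every item j, and E_{v∼D}[ Rev(v|Fin m, q) ] ≥ (1/4) · E_{v∼D}[ p( A(v, p, Fin m) ∩ L ) ]. -/
import Mathlib


open Finset

/-- The total price of a bundle of items under an item pricing `p`. -/
def priceOf {m : ℕ} (p : Fin m → ℝ) (T : Finset (Fin m)) : ℝ := ∑ j ∈ T, p j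

/-- A valuation assigns `0` to the empty set and is nonnegative. -/
def IsValuation {m : ℕ} (v : Finset (Fin m) → ℝ) : Prop :=
  v ∅ = 0 ∧ ∀ T, 0 ≤ v T

/-- `T` is a demanded bundle for valuation `v` at pricing `q` with available set `S`:
it maximizes utility `v(T) - q(T)` among subsets of `S`. -/
def IsDemanded {m : ℕ} (v : Finset (Fin m) → ℝ) (q : Fin m → ℝ)
    (S T : Finset (Fin m)) : Prop :=
  T ⊆ S ∧ ∀ T' ⊆ S, v T' - priceOf q T' ≤ v T - priceOf q T

/-- The revenue `Rev(v|S, q)`: the maximum price of a demanded bundle (the buyer breaks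
ties in favor of a most expensive demanded bundle). -/
noncomputable def BRev {m : ℕ} (v : Finset (Fin m) → ℝ) (q : Fin m → ℝ)
    (S : Finset (Fin m)) : ℝ :=
  sSup {r : ℝ | ∃ T, IsDemanded v q S T ∧ r = priceOf q T}

/-- A selection rule assigns to every triple `(v, q, S)` a demanded bundle whose price
realizes `Rev(v|S, q)`. -/
def IsSelRule {m : ℕ}
    (A : (Finset (Fin m) → ℝ) → (Fin m → ℝ) → Finset (Fin m) → Finset (Fin m)) : Prop :=
  ∀ v q S, IsDemanded v q S (A v q S) ∧ priceOf q (A v q S) = BRev v q S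

/-- A finitely supported probability distribution, given by a finite list of atoms. -/
structure FinDist (α : Type*) where
  card : ℕ
  val : Fin card → α
  prob : Fin card → ℝ
  prob_nonneg : ∀ i, 0 ≤ prob i
  prob_sum : ∑ i : Fin card, prob i = 1

lemma pointwise_rev (m : ℕ) (hm : 1 ≤ m) (c : ℝ) (hc : 0 < c)
    (p : Fin m → ℝ) (hp : ∀ j, 0 ≤ p j)
    (L : Finset (Fin m)) (hL : ∀ j, j ∈ L ↔ 8 * (m : ℝ) ^ 2 * c < p j)
    (q : Fin m → ℝ)
    (hq : ∀ j, q j = if j ∈ L then p j / 2 else max (p j) (2 * (m : ℝ) * c))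
    (v : Finset (Fin m) → ℝ) (Ts Tq : Finset (Fin m))
    (hTs : IsDemanded v p Finset.univ Ts) (hTq : IsDemanded v q Finset.univ Tq) :
    (1 / 4) * priceOf p (Ts ∩ L) ≤ priceOf q Tq := by
  have hm' : (1:ℝ) ≤ (m:ℝ) := by exact_mod_cast hm
  have hq0 : ∀ j, 0 ≤ q j := by
    intro j
    rw [hq j]
    split
    · linarith [hp j]
    · exact le_trans (hp j) (le_max_left _ _)
  have hqTq0 : 0 ≤ priceOf q Tq := Finset.sum_nonneg fun j _ => hq0 j
  -- key exchange inequality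
  have hkey : priceOf p Ts - priceOf q Ts ≤ priceOf p Tq - priceOf q Tq := by
    have h1 := hTs.2 Tq (Finset.subset_univ _)
    have h2 := hTq.2 Ts (Finset.subset_univ _)
    linarith
  -- p j ≤ 2 q j everywhere
  have hb1 : priceOf p Tq - priceOf q Tq ≤ priceOf q Tq := by
    have : priceOf p Tq ≤ 2 * priceOf q Tq := by
      rw [priceOf, priceOf, Finset.mul_sum]
      refine Finset.sum_le_sum fun j _ => ?_
      rw [hq j]
      split
      · next h => linarith
      · have := le_max_left (p j) (2 * (m : ℝ) * c)
        have h0 : 0 ≤ max (p j) (2 * (m : ℝ) * c) :=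
          le_trans (hp j) (le_max_left _ _)
        linarith
    linarith
  -- lower bound on p(Ts) - q(Ts)
  have hb2 : (1/2) * priceOf p (Ts ∩ L) - 2 * (m:ℝ)^2 * c ≤ priceOf p Ts - priceOf q Ts := by
    have hsplit : ∑ j ∈ Ts ∩ L, (p j - q j) + ∑ j ∈ Ts \ L, (p j - q j)
        = ∑ j ∈ Ts, (p j - q j) := Finset.sum_inter_add_sum_sdiff Ts L _
    have hTsL : ∑ j ∈ Ts ∩ L, (p j - q j) = (1/2) * priceOf p (Ts ∩ L) := by
      rw [priceOf, Finset.mul_sum]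
      refine Finset.sum_congr rfl fun j hj => ?_
      rw [hq j, if_pos (Finset.mem_inter.mp hj).2]
      ring
    have hTsnL : -(2 * (m:ℝ)^2 * c) ≤ ∑ j ∈ Ts \ L, (p j - q j) := by
      have hcard : ((Ts \ L).card : ℝ) ≤ (m : ℝ) := by
        have := Finset.card_le_card (Finset.subset_univ (Ts \ L))
        simpa using (by exact_mod_cast this : ((Ts \ L).card : ℝ) ≤ (Fintype.card (Fin m) : ℝ))
      have hterm : ∀ j ∈ Ts \ L, -(2 * (m:ℝ) * c) ≤ p j - q j := by
        intro j hj
        rw [hq j, if_neg (Finset.mem_sdiff.mp hj).2]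
        rcases max_cases (p j) (2 * (m : ℝ) * c) with ⟨he, _⟩ | ⟨he, _⟩ <;>
          rw [he] <;> nlinarith [hp j]
      calc -(2 * (m:ℝ)^2 * c) ≤ ((Ts \ L).card : ℝ) * (-(2 * (m:ℝ) * c)) := by
            nlinarith [mul_le_mul_of_nonneg_right hcard (by positivity : (0:ℝ) ≤ 2*(m:ℝ)*c)]
        _ ≤ ∑ j ∈ Ts \ L, (p j - q j) := by
            rw [mul_comm]
            exact (Finset.card_nsmul_le_sum (Ts \ L) _ _ hterm).trans_eq' (by
              rw [nsmul_eq_mul]; ring_nf)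
    have hsum : priceOf p Ts - priceOf q Ts = ∑ j ∈ Ts, (p j - q j) := by
      rw [priceOf, priceOf, Finset.sum_sub_distrib]
    linarith
  by_cases hne : (Ts ∩ L).Nonempty
  · obtain ⟨j0, hj0⟩ := hne
    have hbig : 8 * (m : ℝ) ^ 2 * c < priceOf p (Ts ∩ L) := by
      have h1 : p j0 ≤ priceOf p (Ts ∩ L) :=
        Finset.single_le_sum (fun j _ => hp j) hj0
      have h2 := (hL j0).mp (Finset.mem_inter.mp hj0).2
      linarith
    linarith
  · rw [Finset.not_nonempty_iff_eq_empty.mp hne]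
    simpa [priceOf] using hqTq0

/-- The high-price recovery pricing: halving the prices of the
high-priced items `L = {j : p_j > 8m²c}` and raising all other prices to at least `2mc`
yields a pricing `q` with every price at least `2mc` whose expected revenue is at least a
quarter of the expected revenue contribution of `L` under `p`. -/
theorem high_price_recovery
    (m : ℕ) (hm : 1 ≤ m) (c : ℝ) (hc : 0 < c)
    (D : FinDist (Finset (Fin m) → ℝ))
    (hD : ∀ a, 0 < D.prob a → IsValuation (D.val a))
    (p : Fin m → ℝ) (hp : ∀ j, 0 ≤ p j)
    (A : (Finset (Fin m) → ℝ) → (Fin m → ℝ) → Finset (Fin m) → Finset (Fin m))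
    (hA : IsSelRule A)
    (L : Finset (Fin m)) (hL : ∀ j, j ∈ L ↔ 8 * (m : ℝ) ^ 2 * c < p j)
    (q : Fin m → ℝ)
    (hq : ∀ j, q j = if j ∈ L then p j / 2 else max (p j) (2 * (m : ℝ) * c)) :
    (∀ j, 2 * (m : ℝ) * c ≤ q j) ∧
      (1 / 4) * ∑ a, D.prob a * priceOf p (A (D.val a) p Finset.univ ∩ L) ≤
        ∑ a, D.prob a * BRev (D.val a) q Finset.univ := by
  have hm' : (1:ℝ) ≤ (m:ℝ) := by exact_mod_cast hm
  constructor
  · intro j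
    rw [hq j]
    split
    · next h =>
        have := (hL j).mp h
        nlinarith [mul_le_mul_of_nonneg_right hm' (by positivity : (0:ℝ) ≤ (m:ℝ)*c)]
    · exact le_max_right _ _
  · rw [Finset.mul_sum]
    refine Finset.sum_le_sum fun a _ => ?_
    rw [← (hA (D.val a) q Finset.univ).2, show (1:ℝ)/4 * (D.prob a * priceOf p (A (D.val a) p Finset.univ ∩ L)) = D.prob a * ((1/4) * priceOf p (A (D.val a) p Finset.univ ∩ L)) by ring]
    exact mul_le_mul_of_nonneg_left
      (pointwise_rev m hm c hc p hp L hL q hq (D.val a) _ _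
        (hA (D.val a) p Finset.univ).1 (hA (D.val a) q Finset.univ).1)
      (D.prob_nonneg a)
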